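/- For parameters satisfying assumption (ii) of the paper, V* := 6J − 2(λ+h) + 4J²/(λ+h) is strictly less than H(σ_c) + Δ^p − H(−1) = 2J(2l_c−1) − (λ+h)l_c(l_c−1) + (λ−h)(l_c(l_c−1)+2l_c−1) + 4J − (λ+h), where l_c = ⌊(2J+λ−h)/(2h)⌋+1. -/

import Mathlib

set_option maxHeartbeats 4000000

private lemma pos_cancel_left {a b : ℝ} (ha : 0 < a) (h : 0 < a * b) : 0 < b := by
  rcases mul_pos_iff.mp h with ⟨_, hb⟩ | ⟨ha', _⟩
  · exact hb
  · exact absurd ha (not_lt.mpr ha'.le)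

/-- Under assumption (ii) of the paper, V* = 6J − 2(λ+h) + 4J²/(λ+h) is
strictly smaller than H(σ_c) + Δ^p − H(−1), where
l_c = ⌊(2J+λ−h)/(2h)⌋+1 and Δ^p = 4J−(λ+h). -/
theorem Vstar_lt_lower_bound (J lam h : ℝ) (hJ : 0 < J) (hlam : 0 < lam)
    (hh1 : lam / 2 < h) (hh2 : h < lam) (hh3 : h < J / 3 - lam)
    (hni1 : ¬ ∃ k : ℤ, (2 * J + lam - h) / (2 * h) = (k : ℝ))
    (hni2 : ¬ ∃ k : ℤ, 2 * J / (lam + h) = (k : ℝ))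
    (hxi : (9 - 4 * Real.sqrt 3) / 3 < h / lam)
    (hcond : lam <
      (4 * J * (1 - h / lam) / ((h / lam) * (1 + h / lam))) *
        (-(2 * (1 - 2 * (h / lam))) / (h / lam) +
          Real.sqrt (64 / (1 + h / lam) - 22 / (h / lam) - 6))⁻¹) :
    6 * J - 2 * (lam + h) + 4 * J ^ 2 / (lam + h) <
      2 * J * (2 * ((⌊(2 * J + lam - h) / (2 * h)⌋ : ℝ) + 1) - 1) -
        (lam + h) * (((⌊(2 * J + lam - h) / (2 * h)⌋ : ℝ) + 1) *
          (((⌊(2 * J + lam - h) / (2 * h)⌋ : ℝ) + 1) - 1)) +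
        (lam - h) * (((⌊(2 * J + lam - h) / (2 * h)⌋ : ℝ) + 1) *
            (((⌊(2 * J + lam - h) / (2 * h)⌋ : ℝ) + 1) - 1) +
          2 * ((⌊(2 * J + lam - h) / (2 * h)⌋ : ℝ) + 1) - 1) +
        4 * J - (lam + h) := by
  have h0 : 0 < h := by linarith
  have hs0 : 0 < lam + h := by linarith
  have ha0 : 0 < lam - h := by linarith
  have h2h : 0 < 2 * h - lam := by linarith
  -- positivity of D
  set Dv : ℝ := 64 / (1 + h / lam) - 22 / (h / lam) - 6 with hDdef
  have hξ0 : 0 < h / lam := div_pos h0 hlam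
  have hξ1 : h / lam < 1 := (div_lt_one hlam).2 hh2
  have hs3 : Real.sqrt 3 ^ 2 = 3 := Real.sq_sqrt (by norm_num)
  have hs3' : (1:ℝ) < Real.sqrt 3 := by nlinarith [Real.sqrt_nonneg 3]
  have p1 : 0 < h / lam - (9 - 4 * Real.sqrt 3) / 3 := by linarith
  have p2 : 0 < (9 + 4 * Real.sqrt 3) / 3 - h / lam := by nlinarith
  have hnum : 0 < 64 * (h / lam) - 22 * (1 + h / lam) - 6 * (h / lam) * (1 + h / lam) := by
    nlinarith [mul_pos p1 p2, hs3]
  have hDv : 0 < Dv := by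
    have hrw : Dv = (64 * (h / lam) - 22 * (1 + h / lam) - 6 * (h / lam) * (1 + h / lam)) /
        ((h / lam) * (1 + h / lam)) := by
      rw [hDdef]; field_simp
    rw [hrw]
    exact div_pos hnum (mul_pos hξ0 (by linarith))
  set q : ℝ := Real.sqrt Dv with hqdef
  have hq0 : 0 ≤ q := Real.sqrt_nonneg _
  have hq2 : q ^ 2 = Dv := Real.sq_sqrt hDv.le
  -- B > 0
  have hBpos : 0 < -(2 * (1 - 2 * (h / lam))) / (h / lam) + q := by
    have h1 : 0 < -(2 * (1 - 2 * (h / lam))) / (h / lam) := by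
      apply div_pos _ hξ0
      have : 1 / 2 < h / lam := by rw [lt_div_iff₀ hlam]; linarith
      linarith
    linarith
  -- from hcond : lam * B < P
  have hlB : lam * (-(2 * (1 - 2 * (h / lam))) / (h / lam) + q) <
      4 * J * (1 - h / lam) / ((h / lam) * (1 + h / lam)) := by
    rw [← div_eq_mul_inv] at hcond
    exact (lt_div_iff₀ hBpos).1 hcond
  have hlamne : lam ≠ 0 := ne_of_gt hlam
  have hne : h ≠ 0 := ne_of_gt h0
  have hsne : lam + h ≠ 0 := ne_of_gt hs0
  have hhs : 0 < h * (lam + h) := mul_pos h0 hs0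
  have e1 : lam * (-(2 * (1 - 2 * (h / lam))) / (h / lam) + q) =
      ((2 * (lam + h) * (2 * h - lam) + h * (lam + h) * q) * lam) / (h * (lam + h)) := by
    field_simp; ring
  have e2 : 4 * J * (1 - h / lam) / ((h / lam) * (1 + h / lam)) =
      ((4 * J * (lam - h)) * lam) / (h * (lam + h)) := by
    field_simp
  rw [e1, e2] at hlB
  have hlB2 : (2 * (lam + h) * (2 * h - lam) + h * (lam + h) * q) * lam <
      (4 * J * (lam - h)) * lam := (div_lt_div_iff_of_pos_right hhs).1 hlB
  have hkey : h * (lam + h) * q < 4 * J * (lam - h) - 2 * (lam + h) * (2 * h - lam) := by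
    have := (mul_lt_mul_iff_of_pos_right hlam).1 hlB2
    linarith
  have hqnn : 0 ≤ h * (lam + h) * q := by positivity
  have hM2 : (h * (lam + h) * q) ^ 2 <
      (4 * J * (lam - h) - 2 * (lam + h) * (2 * h - lam)) ^ 2 :=
    pow_lt_pow_left₀ hkey hqnn (by norm_num)
  have eD : (h * (lam + h) * q) ^ 2 =
      h * (lam + h) * (64 * lam * h - 22 * lam * (lam + h) - 6 * h * (lam + h)) := by
    have : (h * (lam + h) * q) ^ 2 = h ^ 2 * (lam + h) ^ 2 * Dv := by
      rw [mul_pow, mul_pow, hq2]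
    rw [this, hDdef]; field_simp
  -- E > 0 : identity h²s²D − 4disc = 2h(λ−h)(λ+h)(17h−7λ)
  have hEpos : 0 < 2 * h * ((lam - h) * ((lam + h) * (17 * h - 7 * lam))) := by
    have : 0 < 17 * h - 7 * lam := by linarith
    positivity
  have hE : 4 * ((lam + h) ^ 2 * (2 * h - lam) ^ 2 -
      (lam - h) * (lam + h) * ((lam - h) ^ 2 + 2 * h * (lam + h))) <
      h * (lam + h) * (64 * lam * h - 22 * lam * (lam + h) - 6 * h * (lam + h)) := by
    have id1 : h * (lam + h) * (64 * lam * h - 22 * lam * (lam + h) - 6 * h * (lam + h)) -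
        4 * ((lam + h) ^ 2 * (2 * h - lam) ^ 2 -
          (lam - h) * (lam + h) * ((lam - h) ^ 2 + 2 * h * (lam + h))) =
        2 * h * ((lam - h) * ((lam + h) * (17 * h - 7 * lam))) := by ring
    linarith [id1, hEpos]
  -- Q > 0
  have h4aQ : 0 < (4 * (lam - h)) * (4 * (lam - h) * J ^ 2 - 4 * (lam + h) * (2 * h - lam) * J +
      (lam + h) * ((lam - h) ^ 2 + 2 * h * (lam + h))) := by
    have id2 : (4 * (lam - h)) * (4 * (lam - h) * J ^ 2 - 4 * (lam + h) * (2 * h - lam) * J +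
        (lam + h) * ((lam - h) ^ 2 + 2 * h * (lam + h))) =
        (4 * J * (lam - h) - 2 * (lam + h) * (2 * h - lam)) ^ 2 -
        4 * ((lam + h) ^ 2 * (2 * h - lam) ^ 2 -
          (lam - h) * (lam + h) * ((lam - h) ^ 2 + 2 * h * (lam + h))) := by ring
    rw [id2]
    linarith [hM2, eD, hE]
  have hQ : 0 < 4 * (lam - h) * J ^ 2 - 4 * (lam + h) * (2 * h - lam) * J +
      (lam + h) * ((lam - h) ^ 2 + 2 * h * (lam + h)) :=
    pos_cancel_left (by linarith : (0:ℝ) < 4 * (lam - h)) h4aQ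
  -- floor facts
  have hfl : ((⌊(2 * J + lam - h) / (2 * h)⌋ : ℤ) : ℝ) < (2 * J + lam - h) / (2 * h) :=
    lt_of_le_of_ne (Int.floor_le _) (fun he => hni1 ⟨_, he.symm⟩)
  obtain ⟨c, hc⟩ : ∃ c : ℝ, ((⌊(2 * J + lam - h) / (2 * h)⌋ : ℝ) + 1) = c := ⟨_, rfl⟩
  rw [hc]
  have hfu : (2 * J + lam - h) / (2 * h) < c := hc ▸ Int.lt_floor_add_one _
  have h2h0 : 0 < 2 * h := by linarith
  have hc1 : 2 * J + lam - h < 2 * h * c := by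
    have := (div_lt_iff₀ h2h0).1 hfu
    linarith
  have hc2 : 2 * h * c < 2 * J + lam - h + 2 * h := by
    have h2 := (lt_div_iff₀ h2h0).1 hfl
    have h4 : 2 * h * c = 2 * h * ((⌊(2 * J + lam - h) / (2 * h)⌋ : ℝ)) + 2 * h := by
      rw [← hc]; ring
    linarith [h2, h4]
  -- final combination
  have P1 : 0 < (2 * h * c - (2 * J + lam - h)) * ((2 * J + lam - h + 2 * h) - 2 * h * c) := by
    apply mul_pos <;> linarith
  have key : 2 * h * (((2 * J * (2 * c - 1) - (lam + h) * (c * (c - 1)) +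
        (lam - h) * (c * (c - 1) + 2 * c - 1) + 4 * J - (lam + h)) -
        (6 * J - 2 * (lam + h))) * (lam + h) - 4 * J ^ 2) =
      (lam + h) * ((2 * h * c - (2 * J + lam - h)) * ((2 * J + lam - h + 2 * h) - 2 * h * c)) +
      (4 * (lam - h) * J ^ 2 - 4 * (lam + h) * (2 * h - lam) * J +
        (lam + h) * ((lam - h) ^ 2 + 2 * h * (lam + h))) := by ring
  have hX : 0 < 2 * h * (((2 * J * (2 * c - 1) - (lam + h) * (c * (c - 1)) +
        (lam - h) * (c * (c - 1) + 2 * c - 1) + 4 * J - (lam + h)) -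
        (6 * J - 2 * (lam + h))) * (lam + h) - 4 * J ^ 2) := by
    rw [key]
    exact add_pos (mul_pos hs0 P1) hQ
  have hY : 0 < ((2 * J * (2 * c - 1) - (lam + h) * (c * (c - 1)) +
        (lam - h) * (c * (c - 1) + 2 * c - 1) + 4 * J - (lam + h)) -
        (6 * J - 2 * (lam + h))) * (lam + h) - 4 * J ^ 2 :=
    pos_cancel_left h2h0 hX
  have hfin : 4 * J ^ 2 < ((2 * J * (2 * c - 1) - (lam + h) * (c * (c - 1)) +
        (lam - h) * (c * (c - 1) + 2 * c - 1) + 4 * J - (lam + h)) -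
        (6 * J - 2 * (lam + h))) * (lam + h) := by linarith
  have hdiv : 4 * J ^ 2 / (lam + h) <
      (2 * J * (2 * c - 1) - (lam + h) * (c * (c - 1)) +
        (lam - h) * (c * (c - 1) + 2 * c - 1) + 4 * J - (lam + h)) -
        (6 * J - 2 * (lam + h)) := (div_lt_iff₀ hs0).2 hfin
  linarith [hdiv]
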